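/- There is no tournament T with two distinct minimal τ-retentive sets R1 and R2 where |R1| = 3 and |R2| ≤ 12; equivalently, if a tournament has a minimal τ-retentive set of size 3, it has no other minimal τ-retentive set of size at most 12. -/

import Mathlib

variable {V : Type}

/-- Inneighbors of `v` inside the subtournament on `s` (excluding `v` itself). -/
def inn [DecidableEq V] (r : V → V → Prop) [DecidableRel r] (s : Finset V) (v : V) :
    Finset V :=
  (s.filter fun u => r u v).erase v

lemma inn_card_lt [DecidableEq V] (r : V → V → Prop) [DecidableRel r]
    (s : Finset V) (v : V) (hv : v ∈ s) : (inn r s v).card < s.card := by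
  have h1 : inn r s v ⊆ s.erase v := by
    intro x hx
    rcases Finset.mem_erase.mp hx with ⟨hxv, hx2⟩
    exact Finset.mem_erase.mpr ⟨hxv, (Finset.mem_filter.mp hx2).1⟩
  calc (inn r s v).card ≤ (s.erase v).card := Finset.card_le_card h1
    _ < s.card := Finset.card_erase_lt_of_mem hv

/-- The tournament equilibrium set of the subtournament of `r` on `s`:
the union of all minimal τ-retentive sets. -/
def tau [DecidableEq V] (r : V → V → Prop) [DecidableRel r] (s : Finset V) : Set V :=
  {x | ∃ A : Finset V, x ∈ A ∧ A ⊆ s ∧ A.Nonempty ∧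
    (∀ v, v ∈ s → v ∈ A → ((inn r s v).Nonempty → tau r (inn r s v) ⊆ ↑A)) ∧
    ∀ B : Finset V, B ⊆ s → B ⊂ A →
      ¬ (B.Nonempty ∧
        ∀ v, v ∈ s → v ∈ B → ((inn r s v).Nonempty → tau r (inn r s v) ⊆ ↑B))}
termination_by s.card
decreasing_by
  all_goals exact inn_card_lt r s v (by assumption)

/-- `A` is a τ-retentive set of the tournament on `s`. -/
def Retentive [DecidableEq V] (r : V → V → Prop) [DecidableRel r] (s A : Finset V) : Prop :=
  A ⊆ s ∧ A.Nonempty ∧ ∀ v ∈ A, (inn r s v).Nonempty → tau r (inn r s v) ⊆ ↑A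

/-- `A` is a minimal τ-retentive set of the tournament on `s`. -/
def MinRetentive [DecidableEq V] (r : V → V → Prop) [DecidableRel r] (s A : Finset V) : Prop :=
  Retentive r s A ∧ ∀ B, Retentive r s B → B ⊆ A → B = A

/-- `r` is a tournament on the vertex set `s`. -/
def IsTournament (r : V → V → Prop) (s : Finset V) : Prop :=
  (∀ v ∈ s, ¬ r v v) ∧ ∀ u ∈ s, ∀ v ∈ s, u ≠ v → (r u v ↔ ¬ r v u)

/-- `u` is the captain of `v` in the subtournament on `s`:
`u` dominates `v` and all other inneighbors of `v`. -/
def IsCaptain (r : V → V → Prop) (s : Finset V) (u v : V) : Prop :=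
  u ∈ s ∧ v ∈ s ∧ r u v ∧ ∀ w ∈ s, w ≠ u → r w v → r u w

/-- The (undirected) domination graph of the subtournament on `s`. -/
def domGraph (r : V → V → Prop) (s : Finset V) : SimpleGraph V where
  Adj u v := (IsCaptain r s u v ∨ IsCaptain r s v u) ∧ u ≠ v
  symm := by
    constructor
    intro u v h
    exact ⟨h.1.symm, h.2.symm⟩
  loopless := by
    constructor
    intro u h
    exact h.2 rfl

section Basics
set_option linter.unusedSectionVars false
set_option linter.unusedVariables false
variable {V : Type} [DecidableEq V] (r : V → V → Prop) [DecidableRel r]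

lemma mem_inn {g : Finset V} {u v : V} :
    u ∈ inn r g v ↔ u ≠ v ∧ u ∈ g ∧ r u v := by
  unfold inn
  simp [Finset.mem_erase, Finset.mem_filter, and_assoc]

lemma inn_subset {g : Finset V} {v : V} : inn r g v ⊆ g := by
  intro x hx; exact ((mem_inn r).mp hx).2.1

lemma not_mem_inn_self {g : Finset V} {v : V} : v ∉ inn r g v := by
  intro h; exact ((mem_inn r).mp h).1 rfl

lemma isTournament_subset {g s : Finset V} (hgs : g ⊆ s) (hT : IsTournament r s) :
    IsTournament r g :=
  ⟨fun v hv => hT.1 v (hgs hv), fun u hu v hv huv => hT.2 u (hgs hu) v (hgs hv) huv⟩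

lemma tourn_asym {s : Finset V} (hT : IsTournament r s) {u v : V} (hu : u ∈ s) (hv : v ∈ s)
    (h1 : r u v) (h2 : r v u) : False := by
  by_cases h : u = v
  · exact hT.1 u hu (h ▸ h1)
  · exact ((hT.2 u hu v hv h).mp h1) h2

lemma tourn_total {s : Finset V} (hT : IsTournament r s) {u v : V} (hu : u ∈ s) (hv : v ∈ s)
    (hne : u ≠ v) : r u v ∨ r v u := by
  by_cases h : r v u
  · exact Or.inr h
  · exact Or.inl ((hT.2 u hu v hv hne).mpr h)

lemma tau_mem_iff {g : Finset V} {x : V} :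
    x ∈ tau r g ↔ ∃ A : Finset V, x ∈ A ∧ MinRetentive r g A := by
  rw [tau]
  constructor
  · rintro ⟨A, hxA, hAg, hAne, hret, hmin⟩
    refine ⟨A, hxA, ⟨⟨hAg, hAne, fun v hv => hret v (hAg hv) hv⟩, ?_⟩⟩
    intro B hB hBA
    by_contra hne
    exact hmin B hB.1 (ssubset_of_subset_of_ne hBA hne)
      ⟨hB.2.1, fun v _ hvB => hB.2.2 v hvB⟩
  · rintro ⟨A, hxA, ⟨⟨hAg, hAne, hret⟩, hmin⟩⟩
    refine ⟨A, hxA, hAg, hAne, fun v _ hv => hret v hv, ?_⟩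
    rintro B hBg hBA ⟨hBne, hBret⟩
    exact hBA.ne (hmin B ⟨hBg, hBne, fun v hv => hBret v (hBg hv) hv⟩ hBA.subset)

lemma tau_subset {g : Finset V} {x : V} (hx : x ∈ tau r g) : x ∈ g := by
  rw [tau_mem_iff] at hx
  obtain ⟨A, hxA, hA⟩ := hx
  exact hA.1.1 hxA

lemma minRetentive_subset_tau {g A : Finset V} (hA : MinRetentive r g A) :
    ↑A ⊆ tau r g := fun x hx => (tau_mem_iff r).mpr ⟨A, hx, hA⟩

lemma retentive_ground {g : Finset V} (hg : g.Nonempty) : Retentive r g g :=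
  ⟨Finset.Subset.refl g, hg, fun v _ _ => fun x hx => inn_subset r (tau_subset r hx)⟩

lemma exists_minRetentive {g : Finset V} (hg : g.Nonempty) :
    ∃ A, MinRetentive r g A := by
  classical
  have h : ∃ n, ∃ A : Finset V, Retentive r g A ∧ A.card = n :=
    ⟨g.card, g, retentive_ground r hg, rfl⟩
  obtain ⟨n, hn, hmin⟩ := Nat.lt_wfRel.wf.has_min _ h
  obtain ⟨A, hA, hcard⟩ := hn
  refine ⟨A, hA, fun B hB hBA => ?_⟩
  by_contra hne
  have hlt : B.card < n := hcard ▸ Finset.card_lt_card (ssubset_of_subset_of_ne hBA hne)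
  exact hmin B.card ⟨B, hB, rfl⟩ hlt

lemma tau_nonempty {g : Finset V} (hg : g.Nonempty) : (tau r g).Nonempty := by
  obtain ⟨A, hA⟩ := exists_minRetentive r hg
  obtain ⟨x, hx⟩ := hA.1.2.1
  exact ⟨x, (tau_mem_iff r).mpr ⟨A, hx, hA⟩⟩

lemma minRetentive_disjoint {g A B : Finset V} (hA : MinRetentive r g A)
    (hB : MinRetentive r g B) (hne : A ≠ B) {x : V} (hxA : x ∈ A) (hxB : x ∈ B) : False := by
  have hint : Retentive r g (A ∩ B) := by
    refine ⟨fun z hz => hA.1.1 (Finset.mem_inter.mp hz).1, ⟨x, Finset.mem_inter.mpr ⟨hxA, hxB⟩⟩,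
      fun v hv hinn z hz => ?_⟩
    rcases Finset.mem_inter.mp hv with ⟨hvA, hvB⟩
    exact Finset.mem_inter.mpr ⟨hA.1.2.2 v hvA hinn hz, hB.1.2.2 v hvB hinn hz⟩
  have h1 := hA.2 _ hint Finset.inter_subset_left
  have h2 := hB.2 _ hint Finset.inter_subset_right
  exact hne (h1.symm.trans h2)

lemma singleton_retentive {g : Finset V} {v : V} (hv : v ∈ g) (hinn : inn r g v = ∅) :
    Retentive r g {v} :=
  ⟨Finset.singleton_subset_iff.mpr hv, ⟨v, Finset.mem_singleton_self v⟩,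
    fun u hu hne => by
      rw [Finset.mem_singleton.mp hu, hinn] at hne
      exact absurd hne (by simp)⟩

lemma minRetentive_eq_singleton {g A : Finset V} (hA : MinRetentive r g A) {v : V}
    (hv : v ∈ A) (hinn : inn r g v = ∅) : A = {v} :=
  (hA.2 {v} (singleton_retentive r (hA.1.1 hv) hinn)
    (Finset.singleton_subset_iff.mpr hv)).symm

lemma inn_nonempty_of_card {g A : Finset V} (hA : MinRetentive r g A) (h2 : 2 ≤ A.card)
    {v : V} (hv : v ∈ A) : (inn r g v).Nonempty := by
  rcases Finset.eq_empty_or_nonempty (inn r g v) with h | h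
  · have := minRetentive_eq_singleton r hA hv h
    rw [this] at h2; simp at h2
  · exact h

lemma minRetentive_singleton_inn_empty {g A : Finset V} (hA : MinRetentive r g A)
    (h1 : A.card = 1) {v : V} (hv : v ∈ A) : inn r g v = ∅ := by
  rcases Finset.eq_empty_or_nonempty (inn r g v) with h | h
  · exact h
  · exfalso
    have hsub : tau r (inn r g v) ⊆ ↑A := hA.1.2.2 v hv h
    obtain ⟨z, hz⟩ := tau_nonempty r h
    have hzv : z ≠ v := fun he => not_mem_inn_self r (he ▸ tau_subset r hz)
    have hzA : z ∈ A := hsub hz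
    rw [Finset.card_eq_one] at h1
    obtain ⟨w, rfl⟩ := h1
    rw [Finset.mem_singleton] at hv hzA
    exact hzv (hzA.trans hv.symm)

/-- A Condorcet winner: empty in-neighborhood means beats everyone else. -/
lemma cw_beats {g : Finset V} (hT : IsTournament r g) {w : V} (hw : w ∈ g)
    (hinn : inn r g w = ∅) {z : V} (hz : z ∈ g) (hzw : z ≠ w) : r w z := by
  have : z ∉ inn r g w := by rw [hinn]; simp
  rw [mem_inn] at this
  push_neg at this
  rcases tourn_total r hT hw hz (Ne.symm hzw) with h | h
  · exact h
  · exact absurd h (this hzw hz)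

end Basics

section Layer2
set_option linter.unusedSectionVars false
set_option linter.unusedVariables false
set_option maxHeartbeats 1000000
variable {V : Type} [DecidableEq V] (r : V → V → Prop) [DecidableRel r]

lemma no_card_two {g A : Finset V} (hT : IsTournament r g) (hA : MinRetentive r g A) :
    A.card ≠ 2 := by
  intro h2
  have key : ∀ u w : V, u ∈ A → w ∈ A → (∀ z ∈ A, z = u ∨ z = w) → r u w → False := by
    intro u w hu hw henum hruw
    have hinn : (inn r g u).Nonempty := inn_nonempty_of_card r hA (by omega) hu
    obtain ⟨z, hz⟩ := tau_nonempty r hinn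
    have hzA : z ∈ A := hA.1.2.2 u hu hinn hz
    have hzi := (mem_inn r).mp (tau_subset r hz)
    rcases henum z hzA with rfl | rfl
    · exact hzi.1 rfl
    · exact tourn_asym r hT (hA.1.1 hu) (hA.1.1 hw) hruw hzi.2.2
  obtain ⟨x, y, hxy, rfl⟩ := Finset.card_eq_two.mp h2
  have hx : x ∈ ({x, y} : Finset V) := by simp
  have hy : y ∈ ({x, y} : Finset V) := by simp
  have henum : ∀ z ∈ ({x, y} : Finset V), z = x ∨ z = y := by simp
  have henum' : ∀ z ∈ ({x, y} : Finset V), z = y ∨ z = x := by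
    intro z hz; exact (henum z hz).symm
  rcases tourn_total r hT (hA.1.1 hx) (hA.1.1 hy) hxy with h | h
  · exact key x y hx hy henum h
  · exact key y x hy hx henum' h

lemma tau_small_cw {g : Finset V} (hT : IsTournament r g) (hg : g.Nonempty)
    {c : Finset V} (hc : c.card ≤ 2) (hsub : tau r g ⊆ ↑c) :
    ∃ w, w ∈ tau r g ∧ inn r g w = ∅ := by
  obtain ⟨x, hx⟩ := tau_nonempty r hg
  obtain ⟨Q, hxQ, hQ⟩ := (tau_mem_iff r).mp hx
  have hQc : Q ⊆ c := fun z hz => hsub (minRetentive_subset_tau r hQ hz)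
  have hcard : Q.card ≤ 2 := le_trans (Finset.card_le_card hQc) hc
  have h1 : Q.card = 1 := by
    have := no_card_two r hT hQ
    have := Finset.card_pos.mpr hQ.1.2.1
    omega
  exact ⟨x, hx, minRetentive_singleton_inn_empty r hQ h1 hxQ⟩

lemma tau_eq_singleton_cw {g : Finset V} (hT : IsTournament r g) {w : V}
    (htau : tau r g = {w}) : w ∈ g ∧ inn r g w = ∅ := by
  have hw : w ∈ tau r g := by rw [htau]; exact rfl
  obtain ⟨Q, hwQ, hQ⟩ := (tau_mem_iff r).mp hw
  have hQw : Q = {w} := by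
    apply Finset.eq_singleton_iff_unique_mem.mpr
    refine ⟨hwQ, fun z hz => ?_⟩
    have := minRetentive_subset_tau r hQ hz
    rw [htau] at this; exact this
  exact ⟨tau_subset r hw, minRetentive_singleton_inn_empty r hQ (by rw [hQw]; simp) hwQ⟩

lemma size3 {g A : Finset V} (hT : IsTournament r g) (hA : MinRetentive r g A)
    (h3 : A.card = 3) :
    ∃ a b c : V, a ≠ b ∧ a ≠ c ∧ b ≠ c ∧ A = {a, b, c} ∧ r a b ∧ r b c ∧ r c a ∧
      (∀ d ∈ g, d ≠ a → r d b → r a d) ∧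
      (∀ d ∈ g, d ≠ b → r d c → r b d) ∧
      (∀ d ∈ g, d ≠ c → r d a → r c d) := by
  have hW : ∀ u ∈ A, ∃ w, w ∈ A ∧ w ≠ u ∧ r w u ∧
      ∀ z ∈ g, r z u → z ≠ w → r w z := by
    intro u hu
    have hinn : (inn r g u).Nonempty := inn_nonempty_of_card r hA (by omega) hu
    have hsub : tau r (inn r g u) ⊆ ↑A := hA.1.2.2 u hu hinn
    have hT' : IsTournament r (inn r g u) := isTournament_subset r (inn_subset r) hT
    have hbound : tau r (inn r g u) ⊆ ↑(A.erase u) := by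
      intro z hz
      have hz2 := tau_subset r hz
      exact Finset.mem_coe.mpr (Finset.mem_erase.mpr
        ⟨((mem_inn r).mp hz2).1, Finset.mem_coe.mp (hsub hz)⟩)
    have hcard : (A.erase u).card ≤ 2 := by
      rw [Finset.card_erase_of_mem hu, h3]
    obtain ⟨w, hwtau, hwinn⟩ := tau_small_cw r hT' hinn hcard hbound
    have hwi := (mem_inn r).mp (tau_subset r hwtau)
    refine ⟨w, hsub hwtau, hwi.1, hwi.2.2, ?_⟩
    intro z hz hzu hzw
    have hzu' : z ≠ u := by
      intro he; exact hT.1 u (hA.1.1 hu) (he ▸ hzu)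
    exact cw_beats r hT' (tau_subset r hwtau) hwinn
      ((mem_inn r).mpr ⟨hzu', hz, hzu⟩) hzw
  obtain ⟨a, b, c, hab, hac, hbc, rfl⟩ := Finset.card_eq_three.mp h3
  have ha : a ∈ ({a, b, c} : Finset V) := by simp
  have hb : b ∈ ({a, b, c} : Finset V) := by simp
  have hc : c ∈ ({a, b, c} : Finset V) := by simp
  have hag := hA.1.1 ha
  have hbg := hA.1.1 hb
  have hcg := hA.1.1 hc
  have getcw : ∀ u ∈ ({a, b, c} : Finset V), ∀ x, x ∈ ({a, b, c} : Finset V) → r x u →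
      (∀ w ∈ ({a, b, c} : Finset V), w ≠ u → w ≠ x → ¬ r w u) →
      (∀ d ∈ g, d ≠ x → r d u → r x d) := by
    intro u hu x hx hxu hno d hd hdx hdu
    obtain ⟨w, hwA, hwu, hrwu, hcw⟩ := hW u hu
    have hwx : w = x := by
      by_contra hne
      exact hno w hwA hwu hne hrwu
    exact hwx ▸ hcw d hd hdu (hwx ▸ hdx)
  have nobeat : ∀ u ∈ ({a, b, c} : Finset V),
      (∀ w ∈ ({a, b, c} : Finset V), w ≠ u → ¬ r w u) → False := by
    intro u hu hno
    obtain ⟨w, hwA, hwu, hrwu, _⟩ := hW u hu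
    exact hno w hwA hwu hrwu
  have asym : ∀ {u v : V}, u ∈ g → v ∈ g → r u v → r v u → False :=
    fun hu hv h1 h2 => tourn_asym r hT hu hv h1 h2
  have enum : ∀ z ∈ ({a, b, c} : Finset V), z = a ∨ z = b ∨ z = c := by simp
  rcases tourn_total r hT hag hbg hab with h1 | h1 <;>
    rcases tourn_total r hT hbg hcg hbc with h2 | h2 <;>
      rcases tourn_total r hT hag hcg hac with h3' | h3'
  -- (a→b, b→c, a→c) : a unbeaten
  · refine ((nobeat a ha ?_).elim)
    intro w hw hwa hrwa
    rcases enum w hw with rfl | rfl | rfl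
    · exact hwa rfl
    · exact asym hag hbg h1 hrwa
    · exact asym hag hcg h3' hrwa
  -- (a→b, b→c, c→a) : cycle a b c
  · refine ⟨a, b, c, hab, hac, hbc, rfl, h1, h2, h3', ?_, ?_, ?_⟩
    · refine getcw b hb a ha h1 ?_
      intro w hw hwb hwa hrwb
      rcases enum w hw with rfl | rfl | rfl
      · exact hwa rfl
      · exact hwb rfl
      · exact asym hcg hbg hrwb h2
    · refine getcw c hc b hb h2 ?_
      intro w hw hwc hwb hrwc
      rcases enum w hw with rfl | rfl | rfl
      · exact asym hag hcg hrwc h3'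
      · exact hwb rfl
      · exact hwc rfl
    · refine getcw a ha c hc h3' ?_
      intro w hw hwa hwc hrwa
      rcases enum w hw with rfl | rfl | rfl
      · exact hwa rfl
      · exact asym hbg hag hrwa h1
      · exact hwc rfl
  -- (a→b, c→b, a→c) : a unbeaten
  · refine ((nobeat a ha ?_).elim)
    intro w hw hwa hrwa
    rcases enum w hw with rfl | rfl | rfl
    · exact hwa rfl
    · exact asym hag hbg h1 hrwa
    · exact asym hag hcg h3' hrwa
  -- (a→b, c→b, c→a) : c unbeaten
  · refine ((nobeat c hc ?_).elim)
    intro w hw hwc hrwc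
    rcases enum w hw with rfl | rfl | rfl
    · exact asym hcg hag h3' hrwc
    · exact asym hcg hbg h2 hrwc
    · exact hwc rfl
  -- (b→a, b→c, a→c) : b unbeaten
  · refine ((nobeat b hb ?_).elim)
    intro w hw hwb hrwb
    rcases enum w hw with rfl | rfl | rfl
    · exact asym hbg hag h1 hrwb
    · exact hwb rfl
    · exact asym hbg hcg h2 hrwb
  -- (b→a, b→c, c→a) : b unbeaten
  · refine ((nobeat b hb ?_).elim)
    intro w hw hwb hrwb
    rcases enum w hw with rfl | rfl | rfl
    · exact asym hbg hag h1 hrwb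
    · exact hwb rfl
    · exact asym hbg hcg h2 hrwb
  -- (b→a, c→b, a→c) : cycle a c b
  · refine ⟨a, c, b, hac, hab, Ne.symm hbc, ?_, h3', h2, h1, ?_, ?_, ?_⟩
    · ext z; simp; tauto
    · refine getcw c hc a ha h3' ?_
      intro w hw hwc hwa hrwc
      rcases enum w hw with rfl | rfl | rfl
      · exact hwa rfl
      · exact asym hbg hcg hrwc h2
      · exact hwc rfl
    · refine getcw b hb c hc h2 ?_
      intro w hw hwb hwc hrwb
      rcases enum w hw with rfl | rfl | rfl
      · exact asym hag hbg hrwb h1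
      · exact hwb rfl
      · exact hwc rfl
    · refine getcw a ha b hb h1 ?_
      intro w hw hwa hwb hrwa
      rcases enum w hw with rfl | rfl | rfl
      · exact hwa rfl
      · exact hwb rfl
      · exact asym hcg hag hrwa h3'
  -- (b→a, c→b, c→a) : c unbeaten
  · refine ((nobeat c hc ?_).elim)
    intro w hw hwc hrwc
    rcases enum w hw with rfl | rfl | rfl
    · exact asym hcg hag h3' hrwc
    · exact asym hcg hbg h2 hrwc
    · exact hwc rfl

lemma size3_dom {g A : Finset V} (hT : IsTournament r g) (hA : MinRetentive r g A)
    (h3 : A.card = 3) :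
    ∀ d ∈ g, ∀ x ∈ A, ∀ y ∈ A, x ≠ y → r d x → r d y → False := by
  obtain ⟨a, b, c, hab, hac, hbc, hAeq, e1, e2, e3, P1, P2, P3⟩ := size3 r hT hA h3
  intro d hd x hx y hy hxy hdx hdy
  have key : ∀ u w : V, u ∈ g → w ∈ g → r u w → (∀ e ∈ g, e ≠ u → r e w → r u e) →
      r d u → r d w → False := by
    intro u w hu hw hruw P hdu hdw
    have hdu' : d ≠ u := fun he => hT.1 u hu (he ▸ hdu)
    exact tourn_asym r hT hu hd (P d hd hdu' hdw) hdu
  subst hAeq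
  have hag := hA.1.1 (show a ∈ ({a,b,c} : Finset V) by simp)
  have hbg := hA.1.1 (show b ∈ ({a,b,c} : Finset V) by simp)
  have hcg := hA.1.1 (show c ∈ ({a,b,c} : Finset V) by simp)
  have hx' : x = a ∨ x = b ∨ x = c := by simpa using hx
  have hy' : y = a ∨ y = b ∨ y = c := by simpa using hy
  rcases hx' with h | h | h <;> rcases hy' with h' | h' | h' <;>
    rw [h] at hdx <;> rw [h'] at hdy
  · exact hxy (h.trans h'.symm)
  · exact key a b hag hbg e1 P1 hdx hdy
  · exact key c a hcg hag e3 P3 hdy hdx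
  · exact key a b hag hbg e1 P1 hdy hdx
  · exact hxy (h.trans h'.symm)
  · exact key b c hbg hcg e2 P2 hdx hdy
  · exact key c a hcg hag e3 P3 hdx hdy
  · exact key b c hbg hcg e2 P2 hdy hdx
  · exact hxy (h.trans h'.symm)

lemma no_sink {g Q : Finset V} (hT : IsTournament r g) (hQ : MinRetentive r g Q)
    (h2 : 2 ≤ Q.card) {m : V} (hm : m ∈ Q) (hall : ∀ z ∈ Q, z ≠ m → r z m) : False := by
  have hret : Retentive r g (Q.erase m) := by
    refine ⟨fun z hz => hQ.1.1 (Finset.mem_of_mem_erase hz), ?_, ?_⟩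
    · rw [← Finset.card_pos, Finset.card_erase_of_mem hm]; omega
    · intro v hv hinn z hz
      have hvQ := Finset.mem_of_mem_erase hv
      have hzQ : z ∈ Q := hQ.1.2.2 v hvQ hinn hz
      refine Finset.mem_coe.mpr (Finset.mem_erase.mpr ⟨?_, hzQ⟩)
      intro hzm
      have hzinn := (mem_inn r).mp (tau_subset r hz)
      have hrvm : r v m := hall v hvQ (Finset.mem_erase.mp hv).1
      exact tourn_asym r hT (hQ.1.1 hm) (hQ.1.1 hvQ) (hzm ▸ hzinn.2.2) hrvm
  have heq := hQ.2 _ hret (Finset.erase_subset m Q)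
  have : m ∈ Q.erase m := by rw [heq]; exact hm
  simp at this
end Layer2

section Layer3
set_option linter.unusedSectionVars false
set_option linter.unusedVariables false
set_option maxHeartbeats 1000000
variable {V : Type} [DecidableEq V] (r : V → V → Prop) [DecidableRel r]

lemma tau_single {g : Finset V} (hT : IsTournament r g) (hg : g.Nonempty)
    {c : Finset V} (hc : c.card ≤ 5) (hsub : tau r g ⊆ ↑c)
    (h4 : ∀ Q : Finset V, MinRetentive r g Q → Q ⊆ c → Q.card ≠ 4) :
    ∃ Q : Finset V, MinRetentive r g Q ∧ tau r g = ↑Q ∧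
      (Q.card = 1 ∨ Q.card = 3 ∨ Q.card = 5) := by
  classical
  obtain ⟨x, hx⟩ := tau_nonempty r hg
  obtain ⟨Q, hxQ, hQ⟩ := (tau_mem_iff r).mp hx
  have hsubc : ∀ Q' : Finset V, MinRetentive r g Q' → Q' ⊆ c := fun Q' hQ' z hz =>
    hsub (minRetentive_subset_tau r hQ' hz)
  have hsize : ∀ Q' : Finset V, MinRetentive r g Q' →
      Q'.card = 1 ∨ Q'.card = 3 ∨ Q'.card = 5 := by
    intro Q' hQ'
    have h1 := Finset.card_le_card (hsubc Q' hQ')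
    have h2 := no_card_two r hT hQ'
    have h3 := h4 Q' hQ' (hsubc Q' hQ')
    have h5 := Finset.card_pos.mpr hQ'.1.2.1
    omega
  have kill13 : ∀ A B : Finset V, MinRetentive r g A → MinRetentive r g B → A ≠ B →
      A.card = 1 → B.card = 1 ∨ B.card = 3 → False := by
    intro A B hA hB hAB h1 hB13
    obtain ⟨w, rfl⟩ := Finset.card_eq_one.mp h1
    have hwinn : inn r g w = ∅ := minRetentive_singleton_inn_empty r hA rfl (by simp)
    have hwg : w ∈ g := hA.1.1 (by simp)
    have hd : ∀ z ∈ B, z ≠ w := by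
      intro z hz he
      exact minRetentive_disjoint r hA hB hAB (by simp [he]) hz
    rcases hB13 with hB1 | hB3
    · obtain ⟨w', rfl⟩ := Finset.card_eq_one.mp hB1
      have hw'inn : inn r g w' = ∅ := minRetentive_singleton_inn_empty r hB rfl (by simp)
      have hww' : w' ≠ w := hd w' (by simp)
      have hbeat : r w w' := cw_beats r hT hwg hwinn (hB.1.1 (by simp)) hww'
      have : w ∈ inn r g w' := (mem_inn r).mpr ⟨Ne.symm hww', hwg, hbeat⟩
      rw [hw'inn] at this; simp at this
    · obtain ⟨z1, hz1, z2, hz2, hz12⟩ := Finset.one_lt_card.mp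
        (by omega : 1 < B.card)
      exact size3_dom r hT hB hB3 w hwg z1 hz1 z2 hz2 hz12
        (cw_beats r hT hwg hwinn (hB.1.1 hz1) (hd z1 hz1))
        (cw_beats r hT hwg hwinn (hB.1.1 hz2) (hd z2 hz2))
  have huniq : ∀ Q' : Finset V, MinRetentive r g Q' → Q' = Q := by
    intro Q' hQ'
    by_contra hne
    have hdisj : Disjoint Q' Q := Finset.disjoint_left.mpr
      (fun z hz1 hz2 => minRetentive_disjoint r hQ' hQ hne hz1 hz2)
    have hcards : Q'.card + Q.card ≤ 5 := by
      rw [← Finset.card_union_of_disjoint hdisj]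
      exact le_trans (Finset.card_le_card
        (Finset.union_subset (hsubc _ hQ') (hsubc _ hQ))) hc
    rcases hsize Q' hQ' with h1 | h3 | h5 <;> rcases hsize Q hQ with g1 | g3 | g5
    · exact kill13 Q' Q hQ' hQ hne h1 (Or.inl g1)
    · exact kill13 Q' Q hQ' hQ hne h1 (Or.inr g3)
    · omega
    · exact kill13 Q Q' hQ hQ' (Ne.symm hne) g1 (Or.inr h3)
    · omega
    · omega
    · omega
    · omega
    · omega
  refine ⟨Q, hQ, ?_, hsize Q hQ⟩
  apply Set.Subset.antisymm
  · intro z hz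
    obtain ⟨Q2, hzQ2, hQ2⟩ := (tau_mem_iff r).mp hz
    rw [huniq Q2 hQ2] at hzQ2
    exact hzQ2
  · exact minRetentive_subset_tau r hQ

lemma no_card_four {g A : Finset V} (hT : IsTournament r g)
    (hA : MinRetentive r g A) : A.card ≠ 4 := by
  intro h4
  classical
  have hT' : ∀ u : V, IsTournament r (inn r g u) := fun u => isTournament_subset r (inn_subset r) hT
  have hstep : ∀ u ∈ A, ∃ Q : Finset V, MinRetentive r (inn r g u) Q ∧
      tau r (inn r g u) = ↑Q ∧ (Q.card = 1 ∨ Q.card = 3) ∧ Q ⊆ A.erase u := by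
    intro u hu
    have hinn : (inn r g u).Nonempty := inn_nonempty_of_card r hA (by omega) hu
    have hsub : tau r (inn r g u) ⊆ ↑(A.erase u) := by
      intro z hz
      exact Finset.mem_coe.mpr (Finset.mem_erase.mpr
        ⟨((mem_inn r).mp (tau_subset r hz)).1, Finset.mem_coe.mp (hA.1.2.2 u hu hinn hz)⟩)
    have hcard : (A.erase u).card = 3 := by rw [Finset.card_erase_of_mem hu, h4]
    obtain ⟨Q, hQ, htau, hsz⟩ := tau_single r (hT' u) hinn (by omega) hsub
      (by intro Q' _ hQ'sub
          have := Finset.card_le_card hQ'sub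
          omega)
    have hQsub : Q ⊆ A.erase u := fun z hz => Finset.mem_coe.mp
      (hsub (minRetentive_subset_tau r hQ hz))
    have hQle := Finset.card_le_card hQsub
    refine ⟨Q, hQ, htau, by omega, hQsub⟩
  have hsing : ∀ u ∈ A, ∃ w, tau r (inn r g u) = {w} ∧ w ∈ A ∧ w ≠ u ∧ r w u ∧
      (∀ z ∈ g, r z u → z ≠ w → r w z) := by
    intro u hu
    obtain ⟨Q, hQ, htau, hsz, hQsub⟩ := hstep u hu
    rcases hsz with h1 | h3
    · obtain ⟨w, rfl⟩ := Finset.card_eq_one.mp h1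
      have hwQ : w ∈ ({w} : Finset V) := by simp
      have hwi := (mem_inn r).mp (hQ.1.1 hwQ)
      have hwinn : inn r (inn r g u) w = ∅ :=
        minRetentive_singleton_inn_empty r hQ h1 hwQ
      refine ⟨w, by rw [htau]; simp, Finset.mem_of_mem_erase (hQsub hwQ), hwi.1, hwi.2.2, ?_⟩
      intro z hz hzu hzw
      have hzu' : z ≠ u := fun he => hT.1 u (hA.1.1 hu) (he ▸ hzu)
      exact cw_beats r (hT' u) (hQ.1.1 hwQ) hwinn ((mem_inn r).mpr ⟨hzu', hz, hzu⟩) hzw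
    · exfalso
      have hQeq : Q = A.erase u := Finset.eq_of_subset_of_card_le hQsub
        (by rw [Finset.card_erase_of_mem hu, h4, h3])
      have hbeats : ∀ z ∈ A, z ≠ u → r z u := by
        intro z hz hzu
        have hzQ : z ∈ Q := by rw [hQeq]; exact Finset.mem_erase.mpr ⟨hzu, hz⟩
        have : (z : V) ∈ tau r (inn r g u) := by
          rw [htau]; exact Finset.mem_coe.mpr hzQ
        exact ((mem_inn r).mp (tau_subset r this)).2.2
      exact no_sink r hT hA (by omega) hu hbeats
  choose! c hc using hsing
  have hcA : ∀ u ∈ A, c u ∈ A := fun u hu => (hc u hu).2.1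
  have retC : ∀ B : Finset V, B ⊆ A → B.Nonempty → (∀ v ∈ B, c v ∈ B) → B = A := by
    intro B hBA hBne hclosed
    refine hA.2 B ⟨hBA.trans hA.1.1, hBne, ?_⟩ hBA
    intro v hv hinn z hz
    rw [(hc v (hBA hv)).1] at hz
    have : z = c v := hz
    rw [this]; exact Finset.mem_coe.mpr (hclosed v hv)
  have hstep2 : ∀ u ∈ A, c (c u) ≠ u → r u (c (c u)) := by
    intro u hu hne
    have hw := hc u hu
    have hz := hc (c u) (hcA u hu)
    by_contra hnr
    have hzg : c (c u) ∈ g := hA.1.1 (hcA (c u) (hcA u hu))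
    have hug : u ∈ g := hA.1.1 hu
    have hr : r (c (c u)) u := by
      rcases tourn_total r hT hug hzg (Ne.symm hne) with h | h
      · exact absurd h hnr
      · exact h
    have hzw : c (c u) ≠ c u := by
      intro he
      have hb := hz.2.2.2.1
      rw [he] at hb
      exact hT.1 (c u) (hA.1.1 (hcA u hu)) hb
    have := hw.2.2.2.2 (c (c u)) hzg hr hzw
    exact tourn_asym r hT (hA.1.1 (hcA u hu)) hzg this hz.2.2.2.1
  have hno2 : ∀ u ∈ A, c (c u) ≠ u := by
    intro u hu he
    have hBeq := retC {u, c u} (by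
        intro z hz
        rcases Finset.mem_insert.mp hz with rfl | hz
        · exact hu
        · rw [Finset.mem_singleton.mp hz]; exact hcA u hu)
      ⟨u, by simp⟩ (by
        intro v hv
        rcases Finset.mem_insert.mp hv with rfl | hv
        · simp
        · rw [Finset.mem_singleton.mp hv, he]; simp)
    have : A.card ≤ 2 := by
      rw [← hBeq]
      exact le_trans (Finset.card_insert_le u {c u}) (by simp)
    omega
  -- pigeonhole for a 4-cycle
  obtain ⟨x0, hx0⟩ := hA.1.2.1
  have hiter : ∀ n, c^[n] x0 ∈ A := by
    intro n
    induction n with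
    | zero => simpa
    | succ n ih => rw [Function.iterate_succ_apply']; exact hcA _ ih
  have key : ∀ i j : ℕ, i < j → j ≤ 4 → c^[i] x0 = c^[j] x0 → False := by
    intro i j hlt hj4 heq
    set n := j - i with hn
    have hn0 : 0 < n := by omega
    set C := (Finset.range n).image (fun k => c^[i + k] x0) with hCdef
    have hCA : C ⊆ A := by
      intro z hz
      obtain ⟨k, hk, rfl⟩ := Finset.mem_image.mp hz
      exact hiter _
    have hCne : C.Nonempty :=
      ⟨_, Finset.mem_image.mpr ⟨0, Finset.mem_range.mpr hn0, rfl⟩⟩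
    have hCclosed : ∀ v ∈ C, c v ∈ C := by
      intro v hv
      obtain ⟨k, hk, rfl⟩ := Finset.mem_image.mp hv
      rw [Finset.mem_range] at hk
      have hstep3 : c (c^[i + k] x0) = c^[i + k + 1] x0 :=
        (Function.iterate_succ_apply' c (i + k) x0).symm
      rw [hstep3]
      by_cases hk1 : k + 1 < n
      · exact Finset.mem_image.mpr ⟨k + 1, Finset.mem_range.mpr hk1, by rw [← Nat.add_assoc]⟩
      · have hik : c^[i + k + 1] x0 = c^[i] x0 := by
          rw [show i + k + 1 = j by omega, ← heq]
        rw [hik]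
        exact Finset.mem_image.mpr ⟨0, Finset.mem_range.mpr hn0, by rw [Nat.add_zero]⟩
    have hCeq := retC C hCA hCne hCclosed
    have hcard4 : (4 : ℕ) ≤ n := by
      have h1 : C.card ≤ n := le_trans Finset.card_image_le (by rw [Finset.card_range])
      rw [hCeq, h4] at h1
      exact h1
    have hi0 : i = 0 := by omega
    have hj4' : j = 4 := by omega
    have h40 : c^[4] x0 = x0 := by
      rw [← hj4', ← heq, hi0, Function.iterate_zero_apply]
    have h2 : c (c x0) ≠ x0 := hno2 x0 hx0
    have hr1 : r x0 (c (c x0)) := hstep2 x0 hx0 h2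
    have e24 : c (c (c (c x0))) = c^[4] x0 := by
      rw [show (4:ℕ) = 3 + 1 from rfl, Function.iterate_succ_apply',
        show (3:ℕ) = 2 + 1 from rfl, Function.iterate_succ_apply',
        show (2:ℕ) = 1 + 1 from rfl, Function.iterate_succ_apply', Function.iterate_one]
    have h2' : c (c (c (c x0))) ≠ c (c x0) := by
      rw [e24, h40]; exact Ne.symm h2
    have hr2 : r (c (c x0)) (c (c (c (c x0)))) :=
      hstep2 (c (c x0)) (hcA _ (hcA _ hx0)) h2'
    rw [e24, h40] at hr2
    exact tourn_asym r hT (hA.1.1 hx0) (hA.1.1 (hcA _ (hcA _ hx0))) hr1 hr2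
  obtain ⟨i, hi, j, hj, hij, hfij⟩ :=
    Finset.exists_ne_map_eq_of_card_lt_of_maps_to
      (show A.card < (Finset.range 5).card by simp [h4])
      (fun k _ => hiter k)
  rw [Finset.mem_range] at hi hj
  rcases Ne.lt_or_gt hij with hlt | hlt
  · exact key i j hlt (by omega) hfij
  · exact key j i hlt (by omega) hfij.symm
end Layer3

section Layer4
set_option linter.unusedSectionVars false
set_option linter.unusedVariables false
set_option maxHeartbeats 1000000
variable {V : Type} [DecidableEq V] (r : V → V → Prop) [DecidableRel r]

lemma size5_core {g Q : Finset V} (hT : IsTournament r g) (hsub : Q ⊆ g)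
    {u p q t e0 x y : V}
    (hu : u ∈ Q) (hp : p ∈ Q) (hq : q ∈ Q) (ht : t ∈ Q) (he : e0 ∈ Q)
    (henum : ∀ z ∈ Q, z = u ∨ z = p ∨ z = q ∨ z = t ∨ z = e0)
    (hne_eu : e0 ≠ u) (hne_ep : e0 ≠ p) (hne_eq : e0 ≠ q) (hne_et : e0 ≠ t)
    (hne_pq : p ≠ q) (hne_pt : p ≠ t) (hne_qt : q ≠ t)
    (epq : r p q) (eqt : r q t) (etp : r t p)
    (epu : r p u) (equ : r q u) (etu : r t u) (eue : r u e0)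
    (eep : r e0 p) (eeq : r e0 q)
    (domS : ∀ d ∈ g, r d u → ∀ z1 z2 : V, (z1 = p ∨ z1 = q ∨ z1 = t) →
      (z2 = p ∨ z2 = q ∨ z2 = t) → z1 ≠ z2 → r d z1 → r d z2 → False)
    (hW : ∀ m : V, (m = p ∨ m = q ∨ m = t ∨ m = e0) → ∃ w, w ∈ Q ∧ w ≠ m ∧ r w m ∧
      (∀ z ∈ g, r z m → z ≠ w → r w z))
    (hxg : x ∈ g) (hyg : y ∈ g) (hxQ : x ∉ Q) (hyQ : y ∉ Q)
    (hCW : ∀ z ∈ g, z ≠ x → r z y → r x z) : False := by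
  have asym : ∀ {a b : V}, a ∈ g → b ∈ g → r a b → r b a → False :=
    fun ha hb h1 h2 => tourn_asym r hT ha hb h1 h2
  have hug := hsub hu
  have hpg := hsub hp
  have hqg := hsub hq
  have htg := hsub ht
  have heg := hsub he
  have hne_tu : t ≠ u := fun hh => hT.1 u hug (hh ▸ etu)
  have hx_ne : ∀ m ∈ Q, m ≠ x := fun m hm hh => hxQ (hh ▸ hm)
  have hy_ne : ∀ m ∈ Q, m ≠ y := fun m hm hh => hyQ (hh ▸ hm)
  have disj : ∀ m ∈ Q, r m x → r m y → False := by
    intro m hm h1 h2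
    exact asym hxg (hsub hm) (hCW m (hsub hm) (hx_ne m hm) h2) h1
  have rule : ∀ m w : V, m ∈ Q → w ∈ Q → (∀ z ∈ g, r z m → z ≠ w → r w z) →
      ∀ d : V, d ∈ g → d ∉ Q → ¬ r m d → r w d := by
    intro m w hm hw cw d hd hdQ hnmd
    have hdm : d ≠ m := fun hh => hdQ (hh ▸ hm)
    have hrdm : r d m := by
      rcases tourn_total r hT hd (hsub hm) hdm with h | h
      · exact h
      · exact absurd h hnmd
    exact cw d hd hrdm (fun hh => hdQ (hh ▸ hw))
  -- the in-Q beater of q is e0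
  obtain ⟨wq, hwqQ, hwqne, hwqb, cwq⟩ := hW q (by tauto)
  have hwq_e : wq = e0 := by
    have hcand : wq = p ∨ wq = e0 := by
      rcases henum wq hwqQ with rfl | rfl | rfl | rfl | rfl
      · exact (asym hug hqg hwqb equ).elim
      · exact Or.inl rfl
      · exact (hwqne rfl).elim
      · exact (asym htg hqg hwqb eqt).elim
      · exact Or.inr rfl
    rcases hcand with rfl | rfl
    · exact (asym hpg heg (cwq e0 heg eeq hne_ep) eep).elim
    · rfl
  rw [hwq_e] at cwq
  -- beater candidates for t and p
  obtain ⟨wt, hwtQ, hwtne, hwtb, cwt⟩ := hW t (by tauto)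
  have hwt_cand : wt = q ∨ wt = e0 := by
    rcases henum wt hwtQ with rfl | rfl | rfl | rfl | rfl
    · exact (asym hug htg hwtb etu).elim
    · exact (asym hpg htg hwtb etp).elim
    · exact Or.inl rfl
    · exact (hwtne rfl).elim
    · exact Or.inr rfl
  obtain ⟨wp, hwpQ, hwpne, hwpb, cwp⟩ := hW p (by tauto)
  have hwp_cand : wp = t ∨ wp = e0 := by
    rcases henum wp hwpQ with rfl | rfl | rfl | rfl | rfl
    · exact (asym hug hpg hwpb epu).elim
    · exact (hwpne rfl).elim
    · exact (asym hqg hpg hwpb epq).elim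
    · exact Or.inl rfl
    · exact Or.inr rfl
  obtain ⟨we, hweQ, hwene, hweb, cwe⟩ := hW e0 (by tauto)
  rcases tourn_total r hT htg heg hne_et.symm with k2 | k3
  · -- k = 2 : r t e0
    have hwt_q : wt = q := by
      rcases hwt_cand with rfl | rfl
      · rfl
      · exact (asym heg htg hwtb k2).elim
    rw [hwt_q] at cwt
    have hwe_t : we = t := by
      have hcand : we = u ∨ we = t := by
        rcases henum we hweQ with rfl | rfl | rfl | rfl | rfl
        · exact Or.inl rfl
        · exact (asym hpg heg hweb eep).elim
        · exact (asym hqg heg hweb eeq).elim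
        · exact Or.inr rfl
        · exact (hwene rfl).elim
      rcases hcand with h | h
      · exfalso
        rw [h] at cwe
        exact asym hug htg (cwe t htg k2 hne_tu) etu
      · exact h
    rw [hwe_t] at cwe
    have ruleT := rule t q ht hq cwt
    have ruleQ := rule q e0 hq he cwq
    have ruleE := rule e0 t he ht cwe
    by_cases htx : r t x
    · have hty : ¬ r t y := fun h => disj t ht htx h
      have hqy : r q y := ruleT y hyg hyQ hty
      have hqx : ¬ r q x := fun h => disj q hq h hqy
      have hex : r e0 x := ruleQ x hxg hxQ hqx
      have hey : ¬ r e0 y := fun h => disj e0 he hex h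
      exact hty (ruleE y hyg hyQ hey)
    · have hqx : r q x := ruleT x hxg hxQ htx
      have hqy : ¬ r q y := fun h => disj q hq hqx h
      have hey : r e0 y := ruleQ y hyg hyQ hqy
      have hex : ¬ r e0 x := fun h => disj e0 he h hey
      exact htx (ruleE x hxg hxQ hex)
  · -- k = 3 : r e0 t
    have hwt_e : wt = e0 := by
      rcases hwt_cand with h | h
      · exfalso
        rw [h] at cwt
        exact asym hqg heg (cwt e0 heg k3 hne_eq) eeq
      · exact h
    rw [hwt_e] at cwt
    have hwp_e : wp = e0 := by
      rcases hwp_cand with h | h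
      · exfalso
        rw [h] at cwp
        exact asym htg heg (cwp e0 heg eep hne_et) k3
      · exact h
    rw [hwp_e] at cwp
    have hwe_u : we = u := by
      rcases henum we hweQ with rfl | rfl | rfl | rfl | rfl
      · rfl
      · exact (asym hpg heg hweb eep).elim
      · exact (asym hqg heg hweb eeq).elim
      · exact (asym htg heg hweb k3).elim
      · exact (hwene rfl).elim
    rw [hwe_u] at cwe
    have ruleP := rule p e0 hp he cwp
    have ruleQ := rule q e0 hq he cwq
    have ruleT := rule t e0 ht he cwt
    have ruleE := rule e0 u he hu cwe
    have ruleU : ∀ d : V, d ∈ g → d ∉ Q → ¬ r u d →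
        ∃ z : V, (z = p ∨ z = q ∨ z = t) ∧ r z d := by
      intro d hd hdQ hnud
      have hdu : d ≠ u := fun hh => hdQ (hh ▸ hu)
      have hrdu : r d u := by
        rcases tourn_total r hT hd hug hdu with h | h
        · exact h
        · exact absurd h hnud
      have tot : ∀ z : V, z ∈ Q → ¬ r d z → r z d := by
        intro z hz hn
        rcases tourn_total r hT hd (hsub hz) (fun hh => hdQ (hh ▸ hz)) with h | h
        · exact absurd h hn
        · exact h
      by_cases h1 : r d p
      · by_cases h2 : r d q
        · exact (domS d hd hrdu p q (by tauto) (by tauto) hne_pq h1 h2).elim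
        · exact ⟨q, by tauto, tot q hq h2⟩
      · exact ⟨p, by tauto, tot p hp h1⟩
    by_cases hex : r e0 x
    · have hey : ¬ r e0 y := fun h => disj e0 he hex h
      have hpy : r p y := by
        by_cases h : r p y
        · exact h
        · exact absurd (ruleP y hyg hyQ h) hey
      have hqy : r q y := by
        by_cases h : r q y
        · exact h
        · exact absurd (ruleQ y hyg hyQ h) hey
      have hty : r t y := by
        by_cases h : r t y
        · exact h
        · exact absurd (ruleT y hyg hyQ h) hey
      have huy : r u y := ruleE y hyg hyQ hey
      have hux : ¬ r u x := fun h => disj u hu h huy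
      obtain ⟨z, hzc, hzx⟩ := ruleU x hxg hxQ hux
      have hzQ : z ∈ Q := by rcases hzc with rfl | rfl | rfl <;> assumption
      have hzy : r z y := by rcases hzc with rfl | rfl | rfl <;> assumption
      exact disj z hzQ hzx hzy
    · have hux : r u x := ruleE x hxg hxQ hex
      have hpx : r p x := by
        by_cases h : r p x
        · exact h
        · exact absurd (ruleP x hxg hxQ h) hex
      have hqx : r q x := by
        by_cases h : r q x
        · exact h
        · exact absurd (ruleQ x hxg hxQ h) hex
      have htx : r t x := by
        by_cases h : r t x
        · exact h
        · exact absurd (ruleT x hxg hxQ h) hex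
      have huy : ¬ r u y := fun h => disj u hu hux h
      obtain ⟨z, hzc, hzy⟩ := ruleU y hyg hyQ huy
      have hzQ : z ∈ Q := by rcases hzc with rfl | rfl | rfl <;> assumption
      have hzx : r z x := by rcases hzc with rfl | rfl | rfl <;> assumption
      exact disj z hzQ hzx hzy
end Layer4

section Layer5
set_option linter.unusedSectionVars false
set_option linter.unusedVariables false
set_option maxHeartbeats 8000000
variable {V : Type} [DecidableEq V] (r : V → V → Prop) [DecidableRel r]

lemma size5 {g Q : Finset V} (hT : IsTournament r g) (hQ : MinRetentive r g Q)
    (h5 : Q.card = 5) {x y : V} (hxg : x ∈ g) (hyg : y ∈ g) (hxQ : x ∉ Q) (hyQ : y ∉ Q)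
    (hCW : ∀ z ∈ g, z ≠ x → r z y → r x z) : False := by
  classical
  have hg := hQ.1.1
  have hT' : ∀ u : V, IsTournament r (inn r g u) :=
    fun u => isTournament_subset r (inn_subset r) hT
  have asym : ∀ {a b : V}, a ∈ g → b ∈ g → r a b → r b a → False :=
    fun ha hb h1 h2 => tourn_asym r hT ha hb h1 h2
  have hdi : ∀ m ∈ Q, (∃ w, w ∈ Q ∧ w ≠ m ∧ r w m ∧ tau r (inn r g m) = {w} ∧
      (∀ z ∈ g, r z m → z ≠ w → r w z)) ∨
      (∃ S : Finset V, MinRetentive r (inn r g m) S ∧ tau r (inn r g m) = ↑S ∧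
        S.card = 3 ∧ S ⊆ Q.erase m ∧ (∀ z ∈ S, r z m)) := by
    intro m hm
    have hinn : (inn r g m).Nonempty := inn_nonempty_of_card r hQ (by omega) hm
    have hsubt : tau r (inn r g m) ⊆ ↑(Q.erase m) := by
      intro z hz
      exact Finset.mem_coe.mpr (Finset.mem_erase.mpr
        ⟨((mem_inn r).mp (tau_subset r hz)).1, Finset.mem_coe.mp (hQ.1.2.2 m hm hinn hz)⟩)
    have hcard : (Q.erase m).card = 4 := by rw [Finset.card_erase_of_mem hm, h5]
    obtain ⟨S, hS, htau, hsz⟩ := tau_single r (hT' m) hinn (by omega) hsubt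
      (fun Q' hQ' _ => no_card_four r (hT' m) hQ')
    have hSsub : S ⊆ Q.erase m := fun z hz =>
      Finset.mem_coe.mp (hsubt (minRetentive_subset_tau r hS hz))
    have hSle := Finset.card_le_card hSsub
    have hSbeats : ∀ z ∈ S, r z m := by
      intro z hz
      have hzt : z ∈ tau r (inn r g m) := minRetentive_subset_tau r hS hz
      exact ((mem_inn r).mp (tau_subset r hzt)).2.2
    rcases hsz with h1 | h3 | h5'
    · left
      obtain ⟨w, rfl⟩ := Finset.card_eq_one.mp h1
      have hwS : w ∈ ({w} : Finset V) := by simp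
      have hwinn : inn r (inn r g m) w = ∅ := minRetentive_singleton_inn_empty r hS h1 hwS
      refine ⟨w, Finset.mem_of_mem_erase (hSsub hwS), (Finset.mem_erase.mp (hSsub hwS)).1,
        hSbeats w hwS, by rw [htau]; simp, ?_⟩
      intro z hz hzm hzw
      have hzm' : z ≠ m := fun hh => hT.1 m (hg hm) (hh ▸ hzm)
      exact cw_beats r (hT' m) (hS.1.1 hwS) hwinn ((mem_inn r).mpr ⟨hzm', hz, hzm⟩) hzw
    · exact Or.inr ⟨S, hS, htau, h3, hSsub, hSbeats⟩
    · omega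
  by_cases hall : ∀ m ∈ Q, ∃ w, w ∈ Q ∧ w ≠ m ∧ r w m ∧ tau r (inn r g m) = {w} ∧
      (∀ z ∈ g, r z m → z ≠ w → r w z)
  · -- case A : all singletons; parity contradiction
    choose! c hc using hall
    have hcQ : ∀ m ∈ Q, c m ∈ Q := fun m hm => (hc m hm).1
    have retC : ∀ B : Finset V, B ⊆ Q → B.Nonempty → (∀ v ∈ B, c v ∈ B) → B = Q := by
      intro B hBQ hBne hclosed
      refine hQ.2 B ⟨hBQ.trans hg, hBne, ?_⟩ hBQ
      intro v hv hinn z hz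
      rw [(hc v (hBQ hv)).2.2.2.1] at hz
      have hzc : z = c v := hz
      rw [hzc]; exact Finset.mem_coe.mpr (hclosed v hv)
    obtain ⟨x0, hx0⟩ := hQ.1.2.1
    have hiter : ∀ n, c^[n] x0 ∈ Q := by
      intro n
      induction n with
      | zero => simpa
      | succ n ih => rw [Function.iterate_succ_apply']; exact hcQ _ ih
    have key : ∀ i j : ℕ, i < j → c^[i] x0 = c^[j] x0 → 5 ≤ j - i := by
      intro i j hlt heq
      set n := j - i with hn
      have hn0 : 0 < n := by omega
      set C := (Finset.range n).image (fun k => c^[i + k] x0) with hCdef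
      have hCA : C ⊆ Q := by
        intro z hz
        obtain ⟨k, hk, rfl⟩ := Finset.mem_image.mp hz
        exact hiter _
      have hCne : C.Nonempty :=
        ⟨_, Finset.mem_image.mpr ⟨0, Finset.mem_range.mpr hn0, rfl⟩⟩
      have hCclosed : ∀ v ∈ C, c v ∈ C := by
        intro v hv
        obtain ⟨k, hk, rfl⟩ := Finset.mem_image.mp hv
        rw [Finset.mem_range] at hk
        have hstep3 : c (c^[i + k] x0) = c^[i + k + 1] x0 :=
          (Function.iterate_succ_apply' c (i + k) x0).symm
        rw [hstep3]
        by_cases hk1 : k + 1 < n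
        · exact Finset.mem_image.mpr ⟨k + 1, Finset.mem_range.mpr hk1, by rw [← Nat.add_assoc]⟩
        · have hik : c^[i + k + 1] x0 = c^[i] x0 := by
            rw [show i + k + 1 = j by omega, ← heq]
          rw [hik]
          exact Finset.mem_image.mpr ⟨0, Finset.mem_range.mpr hn0, by rw [Nat.add_zero]⟩
      have hCeq := retC C hCA hCne hCclosed
      have h1 : C.card ≤ n := le_trans Finset.card_image_le (by rw [Finset.card_range])
      rw [hCeq, h5] at h1
      exact h1
    have flip1 : ∀ m ∈ Q, r m x → ¬ r (c m) x := by
      intro m hm hmx hcmx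
      have hmy : ¬ r m y := fun hmy =>
        asym hxg (hg hm) (hCW m (hg hm) (fun hh => hxQ (hh ▸ hm)) hmy) hmx
      have hym : r y m := by
        rcases tourn_total r hT hyg (hg hm) (fun hh => hyQ (hh ▸ hm)) with h | h
        · exact h
        · exact absurd h hmy
      have h2 : r (c m) y := (hc m hm).2.2.2.2 y hyg hym (fun hh => hyQ (hh ▸ hcQ m hm))
      have h3 : r x (c m) := hCW (c m) (hg (hcQ m hm)) (fun hh => hxQ (hh ▸ hcQ m hm)) h2
      exact asym hxg (hg (hcQ m hm)) h3 hcmx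
    have flip2 : ∀ m ∈ Q, ¬ r m x → r (c m) x := by
      intro m hm hnmx
      have hxm : r x m := by
        rcases tourn_total r hT hxg (hg hm) (fun hh => hxQ (hh ▸ hm)) with h | h
        · exact h
        · exact absurd h hnmx
      exact (hc m hm).2.2.2.2 x hxg hxm (fun hh => hxQ (hh ▸ hcQ m hm))
    have hflip : ∀ k : ℕ, r (c^[k] x0) x ↔ ¬ r (c^[k + 1] x0) x := by
      intro k
      rw [Function.iterate_succ_apply']
      constructor
      · exact flip1 _ (hiter k)
      · intro h
        by_contra h2
        exact h (flip2 _ (hiter k) h2)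
    obtain ⟨i, hi, j, hj, hij, hfij⟩ :=
      Finset.exists_ne_map_eq_of_card_lt_of_maps_to
        (show Q.card < (Finset.range 6).card by simp [h5])
        (fun k _ => hiter k)
    rw [Finset.mem_range] at hi hj
    have h55 : c^[5] x0 = x0 := by
      rcases Ne.lt_or_gt hij with hlt | hlt
      · have h5n := key i j hlt hfij
        have hi0 : i = 0 := by omega
        have hj5 : j = 5 := by omega
        rw [hi0, hj5] at hfij
        simpa using hfij.symm
      · have h5n := key j i hlt hfij.symm
        have hi0 : j = 0 := by omega
        have hj5 : i = 5 := by omega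
        rw [hi0, hj5] at hfij
        simpa using hfij
    have f0 := hflip 0
    have f1 := hflip 1
    have f2 := hflip 2
    have f3 := hflip 3
    have f4 := hflip 4
    norm_num at f0 f1 f2 f3 f4
    norm_num at h55
    rw [h55] at f4
    tauto
  · -- case B : some vertex with a 3-cycle component
    have hnotall : ∃ u, ¬(u ∈ Q → ∃ w, w ∈ Q ∧ w ≠ u ∧ r w u ∧ tau r (inn r g u) = {w} ∧
        (∀ z ∈ g, r z u → z ≠ w → r w z)) := not_forall.mp hall
    obtain ⟨u, hu2⟩ := hnotall
    obtain ⟨hu, hns⟩ := Classical.not_imp.mp hu2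
    rcases hdi u hu with hsing | ⟨S, hSmin, hStau, hS3, hSsub, hSbeats⟩
    · exact hns hsing
    obtain ⟨p, q, t, hpq, hpt, hqt, hSeq, epq, eqt, etp, _, _, _⟩ := size3 r (hT' u) hSmin hS3
    have domS' := size3_dom r (hT' u) hSmin hS3
    have hpS : p ∈ S := by rw [hSeq]; simp
    have hqS : q ∈ S := by rw [hSeq]; simp
    have htS : t ∈ S := by rw [hSeq]; simp
    have hpQ : p ∈ Q := Finset.mem_of_mem_erase (hSsub hpS)
    have hqQ : q ∈ Q := Finset.mem_of_mem_erase (hSsub hqS)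
    have htQ : t ∈ Q := Finset.mem_of_mem_erase (hSsub htS)
    have hpu : p ≠ u := (Finset.mem_erase.mp (hSsub hpS)).1
    have hqu : q ≠ u := (Finset.mem_erase.mp (hSsub hqS)).1
    have htu : t ≠ u := (Finset.mem_erase.mp (hSsub htS)).1
    have epu : r p u := hSbeats p hpS
    have equ : r q u := hSbeats q hqS
    have etu : r t u := hSbeats t htS
    obtain ⟨e0, heQ, heN⟩ : ∃ e0 ∈ Q, e0 ∉ ({u, p, q, t} : Finset V) := by
      by_contra hcon
      push_neg at hcon
      have hQsub : Q ⊆ {u, p, q, t} := fun z hz => hcon z hz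
      have hc1 := Finset.card_le_card hQsub
      have hc2 : ({u, p, q, t} : Finset V).card ≤ 4 := by
        refine le_trans (Finset.card_insert_le _ _) ?_
        have hc3 : ({p, q, t} : Finset V).card ≤ 3 := by
          refine le_trans (Finset.card_insert_le _ _) ?_
          have hc4 : ({q, t} : Finset V).card ≤ 2 :=
            le_trans (Finset.card_insert_le _ _) (by simp)
          omega
        omega
      omega
    have heN' : ¬(e0 = u ∨ e0 = p ∨ e0 = q ∨ e0 = t) := by simpa using heN
    push_neg at heN'
    obtain ⟨heu, hep, heq', het⟩ := heN'
    have hQeq : ({u, p, q, t, e0} : Finset V) = Q := by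
      apply Finset.eq_of_subset_of_card_le
      · intro z hz
        simp only [Finset.mem_insert, Finset.mem_singleton] at hz
        rcases hz with rfl | rfl | rfl | rfl | rfl <;> assumption
      · have c2 : ({t, e0} : Finset V).card = 2 := by
          rw [Finset.card_insert_of_notMem (by simp [Ne.symm het]), Finset.card_singleton]
        have c3 : ({q, t, e0} : Finset V).card = 3 := by
          rw [Finset.card_insert_of_notMem (by simp [hqt, Ne.symm heq']), c2]
        have c4 : ({p, q, t, e0} : Finset V).card = 4 := by
          rw [Finset.card_insert_of_notMem (by simp [hpq, hpt, Ne.symm hep]), c3]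
        have c5 : ({u, p, q, t, e0} : Finset V).card = 5 := by
          rw [Finset.card_insert_of_notMem (by simp [Ne.symm hpu, Ne.symm hqu, Ne.symm htu, Ne.symm heu]), c4]
        omega
    have henum : ∀ z ∈ Q, z = u ∨ z = p ∨ z = q ∨ z = t ∨ z = e0 := by
      intro z hz
      rw [← hQeq] at hz
      simpa using hz
    have hue : r u e0 := by
      rcases tourn_total r hT (hg hu) (hg heQ) (Ne.symm heu) with h | h
      · exact h
      · exfalso
        apply no_sink r hT hQ (by omega) hu
        intro z hz hzne
        rcases henum z hz with rfl | rfl | rfl | rfl | rfl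
        · exact (hzne rfl).elim
        · exact epu
        · exact equ
        · exact etu
        · exact h
    have he_sing : ∃ w, w ∈ Q ∧ w ≠ e0 ∧ r w e0 ∧ tau r (inn r g e0) = {w} ∧
        (∀ z ∈ g, r z e0 → z ≠ w → r w z) := by
      rcases hdi e0 heQ with h | ⟨Se, hSemin, hSetau, hSe3, hSesub, hSebeats⟩
      · exact h
      · exfalso
        have huSe : u ∉ Se := by
          intro huSe
          obtain ⟨a', b', c', hab', hac', hbc', hSeeq, f1, f2, f3, _, _, _⟩ :=
            size3 r (hT' e0) hSemin hSe3
          have hbeat : ∃ z ∈ Se, r u z := by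
            have hmem : u = a' ∨ u = b' ∨ u = c' := by
              rw [hSeeq] at huSe; simpa using huSe
            rcases hmem with hq1 | hq1 | hq1
            · exact ⟨b', by rw [hSeeq]; simp, hq1 ▸ f1⟩
            · exact ⟨c', by rw [hSeeq]; simp, hq1 ▸ f2⟩
            · exact ⟨a', by rw [hSeeq]; simp, hq1 ▸ f3⟩
          obtain ⟨z, hzSe, huz⟩ := hbeat
          have hzQ : z ∈ Q := Finset.mem_of_mem_erase (hSesub hzSe)
          have hze : z ≠ e0 := (Finset.mem_erase.mp (hSesub hzSe)).1
          rcases henum z hzQ with h | h | h | h | h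
          · rw [h] at huz; exact hT.1 u (hg hu) huz
          · rw [h] at huz; exact asym (hg hu) (hg hpQ) huz epu
          · rw [h] at huz; exact asym (hg hu) (hg hqQ) huz equ
          · rw [h] at huz; exact asym (hg hu) (hg htQ) huz etu
          · exact hze h
        have hSe_pqt : Se ⊆ ({p, q, t} : Finset V) := by
          intro z hz
          have hzQ : z ∈ Q := Finset.mem_of_mem_erase (hSesub hz)
          have hze : z ≠ e0 := (Finset.mem_erase.mp (hSesub hz)).1
          rcases henum z hzQ with rfl | rfl | rfl | rfl | rfl
          · exact (huSe hz).elim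
          · simp
          · simp
          · simp
          · exact (hze rfl).elim
        have hSe_eq : Se = ({p, q, t} : Finset V) := by
          apply Finset.eq_of_subset_of_card_le hSe_pqt
          have hc3 : ({p, q, t} : Finset V).card ≤ 3 := by
            refine le_trans (Finset.card_insert_le _ _) ?_
            have hc4 : ({q, t} : Finset V).card ≤ 2 :=
              le_trans (Finset.card_insert_le _ _) (by simp)
            omega
          omega
        apply no_sink r hT hQ (by omega) heQ
        intro z hz hzne
        rcases henum z hz with h | h | h | h | h
        · rw [h]; exact hue
        · rw [h]; exact hSebeats p (by rw [hSe_eq]; simp)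
        · rw [h]; exact hSebeats q (by rw [hSe_eq]; simp)
        · rw [h]; exact hSebeats t (by rw [hSe_eq]; simp)
        · exact (hzne h).elim
    obtain ⟨we, hweQ, hwene, hweb, hwetau, cwe⟩ := he_sing
    -- type-c data for p, q, t
    have hpc : ∃ w, w ∈ Q ∧ w ≠ p ∧ r w p ∧ tau r (inn r g p) = {w} ∧ (w = t ∨ w = e0) ∧
        (∀ z ∈ g, r z p → z ≠ w → r w z) := by
      rcases hdi p hpQ with ⟨w, h1, h2, h3, h4, h5'⟩ | ⟨Sp, _, _, hSp3, hSpsub, hSpbeats⟩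
      · refine ⟨w, h1, h2, h3, h4, ?_, h5'⟩
        rcases henum w h1 with rfl | rfl | rfl | rfl | rfl
        · exact (asym (hg hu) (hg hpQ) h3 epu).elim
        · exact (h2 rfl).elim
        · exact (asym (hg hqQ) (hg hpQ) h3 epq).elim
        · exact Or.inl rfl
        · exact Or.inr rfl
      · exfalso
        have hsma : Sp ⊆ ({t, e0} : Finset V) := by
          intro z hz
          have hzQ : z ∈ Q := Finset.mem_of_mem_erase (hSpsub hz)
          have hzp : z ≠ p := (Finset.mem_erase.mp (hSpsub hz)).1
          have hzbp : r z p := hSpbeats z hz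
          rcases henum z hzQ with rfl | rfl | rfl | rfl | rfl
          · exact (asym (hg hu) (hg hpQ) hzbp epu).elim
          · exact (hzp rfl).elim
          · exact (asym (hg hqQ) (hg hpQ) hzbp epq).elim
          · simp
          · simp
        have hle := Finset.card_le_card hsma
        have h2le : ({t, e0} : Finset V).card ≤ 2 :=
          le_trans (Finset.card_insert_le _ _) (by simp)
        omega
    have hqc : ∃ w, w ∈ Q ∧ w ≠ q ∧ r w q ∧ tau r (inn r g q) = {w} ∧ (w = p ∨ w = e0) ∧
        (∀ z ∈ g, r z q → z ≠ w → r w z) := by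
      rcases hdi q hqQ with ⟨w, h1, h2, h3, h4, h5'⟩ | ⟨Sq, _, _, hSq3, hSqsub, hSqbeats⟩
      · refine ⟨w, h1, h2, h3, h4, ?_, h5'⟩
        rcases henum w h1 with rfl | rfl | rfl | rfl | rfl
        · exact (asym (hg hu) (hg hqQ) h3 equ).elim
        · exact Or.inl rfl
        · exact (h2 rfl).elim
        · exact (asym (hg htQ) (hg hqQ) h3 eqt).elim
        · exact Or.inr rfl
      · exfalso
        have hsma : Sq ⊆ ({p, e0} : Finset V) := by
          intro z hz
          have hzQ : z ∈ Q := Finset.mem_of_mem_erase (hSqsub hz)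
          have hzq : z ≠ q := (Finset.mem_erase.mp (hSqsub hz)).1
          have hzbq : r z q := hSqbeats z hz
          rcases henum z hzQ with rfl | rfl | rfl | rfl | rfl
          · exact (asym (hg hu) (hg hqQ) hzbq equ).elim
          · simp
          · exact (hzq rfl).elim
          · exact (asym (hg htQ) (hg hqQ) hzbq eqt).elim
          · simp
        have hle := Finset.card_le_card hsma
        have h2le : ({p, e0} : Finset V).card ≤ 2 :=
          le_trans (Finset.card_insert_le _ _) (by simp)
        omega
    have htc : ∃ w, w ∈ Q ∧ w ≠ t ∧ r w t ∧ tau r (inn r g t) = {w} ∧ (w = q ∨ w = e0) ∧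
        (∀ z ∈ g, r z t → z ≠ w → r w z) := by
      rcases hdi t htQ with ⟨w, h1, h2, h3, h4, h5'⟩ | ⟨St, _, _, hSt3, hStsub, hStbeats⟩
      · refine ⟨w, h1, h2, h3, h4, ?_, h5'⟩
        rcases henum w h1 with rfl | rfl | rfl | rfl | rfl
        · exact (asym (hg hu) (hg htQ) h3 etu).elim
        · exact (asym (hg hpQ) (hg htQ) h3 etp).elim
        · exact Or.inl rfl
        · exact (h2 rfl).elim
        · exact Or.inr rfl
      · exfalso
        have hsma : St ⊆ ({q, e0} : Finset V) := by
          intro z hz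
          have hzQ : z ∈ Q := Finset.mem_of_mem_erase (hStsub hz)
          have hzt : z ≠ t := (Finset.mem_erase.mp (hStsub hz)).1
          have hzbt : r z t := hStbeats z hz
          rcases henum z hzQ with rfl | rfl | rfl | rfl | rfl
          · exact (asym (hg hu) (hg htQ) hzbt etu).elim
          · exact (asym (hg hpQ) (hg htQ) hzbt etp).elim
          · simp
          · exact (hzt rfl).elim
          · simp
        have hle := Finset.card_le_card hsma
        have h2le : ({q, e0} : Finset V).card ≤ 2 :=
          le_trans (Finset.card_insert_le _ _) (by simp)
        omega
    obtain ⟨wp, hwpQ, hwpne, hwpb, hwptau, hwp_cand, cwp⟩ := hpc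
    obtain ⟨wq, hwqQ, hwqne, hwqb, hwqtau, hwq_cand, cwq⟩ := hqc
    obtain ⟨wt, hwtQ, hwtne, hwtb, hwttau, hwt_cand, cwt⟩ := htc
    -- one of wp, wq, wt must be e0
    have hm0 : wp = e0 ∨ wq = e0 ∨ wt = e0 := by
      by_contra hcon
      push_neg at hcon
      obtain ⟨hn1, hn2, hn3⟩ := hcon
      have hwp_t : wp = t := by rcases hwp_cand with h | h; exacts [h, (hn1 h).elim]
      have hwq_p : wq = p := by rcases hwq_cand with h | h; exacts [h, (hn2 h).elim]
      have hwt_q : wt = q := by rcases hwt_cand with h | h; exacts [h, (hn3 h).elim]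
      have hret : Retentive r g ({u, p, q, t} : Finset V) := by
        refine ⟨?_, ⟨u, by simp⟩, ?_⟩
        · intro z hz
          simp only [Finset.mem_insert, Finset.mem_singleton] at hz
          rcases hz with rfl | rfl | rfl | rfl
          exacts [hg hu, hg hpQ, hg hqQ, hg htQ]
        · intro v hv hinn z hz
          simp only [Finset.mem_insert, Finset.mem_singleton] at hv
          rcases hv with rfl | rfl | rfl | rfl
          · rw [hStau, hSeq] at hz
            simp only [Finset.coe_insert, Finset.coe_singleton, Set.mem_insert_iff,
              Set.mem_singleton_iff] at hz
            simp only [Finset.coe_insert, Finset.coe_singleton, Set.mem_insert_iff,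
              Set.mem_singleton_iff]
            tauto
          · rw [hwptau] at hz
            have hzw : z = wp := hz
            rw [hzw, hwp_t]; simp
          · rw [hwqtau] at hz
            have hzw : z = wq := hz
            rw [hzw, hwq_p]; simp
          · rw [hwttau] at hz
            have hzw : z = wt := hz
            rw [hzw, hwt_q]; simp
      have heq2 := hQ.2 _ hret (by
        intro z hz
        simp only [Finset.mem_insert, Finset.mem_singleton] at hz
        rcases hz with rfl | rfl | rfl | rfl <;> assumption)
      have : e0 ∈ ({u, p, q, t} : Finset V) := by rw [heq2]; exact heQ
      simp only [Finset.mem_insert, Finset.mem_singleton] at this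
      rcases this with h | h | h | h
      exacts [heu h, hep h, heq' h, het h]
    -- dominance in the right shape
    have domC : ∀ d ∈ g, r d u → ∀ z1 z2 : V, (z1 = p ∨ z1 = q ∨ z1 = t) →
        (z2 = p ∨ z2 = q ∨ z2 = t) → z1 ≠ z2 → r d z1 → r d z2 → False := by
      intro d hd hdu z1 z2 hz1 hz2 hzne h1 h2
      have hdu' : d ≠ u := fun hh => hT.1 u (hg hu) (hh ▸ hdu)
      have hdin : d ∈ inn r g u := (mem_inn r).mpr ⟨hdu', hd, hdu⟩
      refine domS' d hdin z1 ?_ z2 ?_ hzne h1 h2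
      · rw [hSeq]; simp only [Finset.mem_insert, Finset.mem_singleton]; tauto
      · rw [hSeq]; simp only [Finset.mem_insert, Finset.mem_singleton]; tauto
    have hWall : ∀ m : V, (m = p ∨ m = q ∨ m = t ∨ m = e0) → ∃ w, w ∈ Q ∧ w ≠ m ∧ r w m ∧
        (∀ z ∈ g, r z m → z ≠ w → r w z) := by
      intro m hm
      rcases hm with rfl | rfl | rfl | rfl
      exacts [⟨wp, hwpQ, hwpne, hwpb, cwp⟩, ⟨wq, hwqQ, hwqne, hwqb, cwq⟩,
        ⟨wt, hwtQ, hwtne, hwtb, cwt⟩, ⟨we, hweQ, hwene, hweb, cwe⟩]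
    rcases hm0 with hE | hE | hE
    · -- wp = e0 : e0 beats p and t ; rotate to (t, p, q)
      have heP : r e0 p := by rw [← hE]; exact hwpb
      have heT : r e0 t := by
        have hh := cwp t (hg htQ) etp (by rw [hE]; exact Ne.symm het)
        rw [hE] at hh; exact hh
      have henum2 : ∀ z ∈ Q, z = u ∨ z = t ∨ z = p ∨ z = q ∨ z = e0 := by
        intro z hz
        rcases henum z hz with h | h | h | h | h
        exacts [Or.inl h, Or.inr (Or.inr (Or.inl h)), Or.inr (Or.inr (Or.inr (Or.inl h))),
          Or.inr (Or.inl h), Or.inr (Or.inr (Or.inr (Or.inr h)))]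
      have perm1 : ∀ z1 : V, (z1 = t ∨ z1 = p ∨ z1 = q) → (z1 = p ∨ z1 = q ∨ z1 = t) := by
        intro z1 a
        rcases a with h | h | h
        exacts [Or.inr (Or.inr h), Or.inl h, Or.inr (Or.inl h)]
      have domC2 : ∀ d ∈ g, r d u → ∀ z1 z2 : V, (z1 = t ∨ z1 = p ∨ z1 = q) →
          (z2 = t ∨ z2 = p ∨ z2 = q) → z1 ≠ z2 → r d z1 → r d z2 → False := by
        intro d hd hdu z1 z2 a b cc d1 d2
        exact domC d hd hdu z1 z2 (perm1 z1 a) (perm1 z2 b) cc d1 d2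
      have hWall2 : ∀ m : V, (m = t ∨ m = p ∨ m = q ∨ m = e0) → ∃ w, w ∈ Q ∧ w ≠ m ∧
          r w m ∧ (∀ z ∈ g, r z m → z ≠ w → r w z) := by
        intro m hm
        refine hWall m ?_
        rcases hm with h | h | h | h
        exacts [Or.inr (Or.inr (Or.inl h)), Or.inl h, Or.inr (Or.inl h),
          Or.inr (Or.inr (Or.inr h))]
      exact size5_core r hT hg hu htQ hpQ hqQ heQ henum2
        heu het hep heq' (Ne.symm hpt) (Ne.symm hqt) hpq
        etp epq eqt etu epu equ hue heT heP
        domC2 hWall2 hxg hyg hxQ hyQ hCW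
    · -- wq = e0 : e0 beats q and p ; identity rotation
      have heQ2 : r e0 q := by rw [← hE]; exact hwqb
      have heP : r e0 p := by
        have hh := cwq p (hg hpQ) epq (by rw [hE]; exact Ne.symm hep)
        rw [hE] at hh; exact hh
      exact size5_core r hT hg hu hpQ hqQ htQ heQ henum
        heu hep heq' het hpq hpt hqt
        epq eqt etp epu equ etu hue heP heQ2
        domC hWall hxg hyg hxQ hyQ hCW
    · -- wt = e0 : e0 beats t and q ; rotate to (q, t, p)
      have heT : r e0 t := by rw [← hE]; exact hwtb
      have heQ2 : r e0 q := by
        have hh := cwt q (hg hqQ) eqt (by rw [hE]; exact Ne.symm heq')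
        rw [hE] at hh; exact hh
      have henum2 : ∀ z ∈ Q, z = u ∨ z = q ∨ z = t ∨ z = p ∨ z = e0 := by
        intro z hz
        rcases henum z hz with h | h | h | h | h
        exacts [Or.inl h, Or.inr (Or.inr (Or.inr (Or.inl h))), Or.inr (Or.inl h),
          Or.inr (Or.inr (Or.inl h)), Or.inr (Or.inr (Or.inr (Or.inr h)))]
      have perm1 : ∀ z1 : V, (z1 = q ∨ z1 = t ∨ z1 = p) → (z1 = p ∨ z1 = q ∨ z1 = t) := by
        intro z1 a
        rcases a with h | h | h
        exacts [Or.inr (Or.inl h), Or.inr (Or.inr h), Or.inl h]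
      have domC2 : ∀ d ∈ g, r d u → ∀ z1 z2 : V, (z1 = q ∨ z1 = t ∨ z1 = p) →
          (z2 = q ∨ z2 = t ∨ z2 = p) → z1 ≠ z2 → r d z1 → r d z2 → False := by
        intro d hd hdu z1 z2 a b cc d1 d2
        exact domC d hd hdu z1 z2 (perm1 z1 a) (perm1 z2 b) cc d1 d2
      have hWall2 : ∀ m : V, (m = q ∨ m = t ∨ m = p ∨ m = e0) → ∃ w, w ∈ Q ∧ w ≠ m ∧
          r w m ∧ (∀ z ∈ g, r z m → z ≠ w → r w z) := by
        intro m hm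
        refine hWall m ?_
        rcases hm with h | h | h | h
        exacts [Or.inr (Or.inl h), Or.inr (Or.inr (Or.inl h)), Or.inl h,
          Or.inr (Or.inr (Or.inr h))]
      exact size5_core r hT hg hu hqQ htQ hpQ heQ henum2
        heu heq' het hep hqt (Ne.symm hpq) (Ne.symm hpt)
        eqt etp epq equ etu epu hue heQ2 heT
        domC2 hWall2 hxg hyg hxQ hyQ hCW
end Layer5

section Layer6
set_option linter.unusedSectionVars false
set_option linter.unusedVariables false
set_option maxHeartbeats 2000000
variable {V : Type} [DecidableEq V] (r : V → V → Prop) [DecidableRel r]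

lemma exists_low_indeg {s R : Finset V} (hT : IsTournament r s) (hR : R ⊆ s)
    (hRne : R.Nonempty) (hcard : R.card ≤ 12) : ∃ v ∈ R, (inn r R v).card ≤ 5 := by
  classical
  by_contra hcon
  push_neg at hcon
  have hsum : 6 * R.card ≤ ∑ v ∈ R, (inn r R v).card := by
    calc 6 * R.card = ∑ _v ∈ R, 6 := by rw [Finset.sum_const, smul_eq_mul, mul_comm]
    _ ≤ ∑ v ∈ R, (inn r R v).card := Finset.sum_le_sum (fun v hv => hcon v hv)
  have hsigma : (R.sigma (fun v => inn r R v)).card = ∑ v ∈ R, (inn r R v).card :=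
    Finset.card_sigma _ _
  have hmaps : ∀ z ∈ R.sigma (fun v => inn r R v),
      ({z.2, z.1} : Finset V) ∈ R.powersetCard 2 := by
    intro z hz
    rw [Finset.mem_sigma] at hz
    have h2 := (mem_inn r).mp hz.2
    rw [Finset.mem_powersetCard]
    constructor
    · intro w hw
      rcases Finset.mem_insert.mp hw with rfl | hw
      · exact h2.2.1
      · rw [Finset.mem_singleton.mp hw]; exact hz.1
    · rw [Finset.card_insert_of_notMem (by simp [h2.1]), Finset.card_singleton]
  have hinj : ∀ z1 ∈ R.sigma (fun v => inn r R v), ∀ z2 ∈ R.sigma (fun v => inn r R v),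
      ({z1.2, z1.1} : Finset V) = ({z2.2, z2.1} : Finset V) → z1 = z2 := by
    rintro ⟨v1, u1⟩ hz1 ⟨v2, u2⟩ hz2 heq
    rw [Finset.mem_sigma] at hz1 hz2
    have h1 := (mem_inn r).mp hz1.2
    have h2 := (mem_inn r).mp hz2.2
    simp only at heq h1 h2 hz1 hz2
    have hm1 : v1 = u2 ∨ v1 = v2 := by
      have hmm : v1 ∈ ({u2, v2} : Finset V) := by rw [← heq]; simp
      simpa using hmm
    have hm2 : u1 = u2 ∨ u1 = v2 := by
      have hmm : u1 ∈ ({u2, v2} : Finset V) := by rw [← heq]; simp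
      simpa using hmm
    rcases hm1 with hA | hA
    · exfalso
      rcases hm2 with hB | hB
      · exact h1.1 (hB.trans hA.symm)
      · have hr2 : r v1 u1 := by rw [hA, hB]; exact h2.2.2
        exact tourn_asym r hT (hR h1.2.1) (hR hz1.1) h1.2.2 hr2
    · rcases hm2 with hB | hB
      · simp [hA, hB]
      · exfalso
        exact h1.1 (hB.trans hA.symm)
  have hle := Finset.card_le_card_of_injOn _ hmaps hinj
  rw [hsigma, Finset.card_powersetCard] at hle
  have hch : Nat.choose R.card 2 = R.card * (R.card - 1) / 2 := Nat.choose_two_right _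
  rw [hch] at hle
  have hA : (∑ v ∈ R, (inn r R v).card) * 2 ≤ R.card * (R.card - 1) :=
    (Nat.le_div_iff_mul_le (by norm_num)).mp hle
  have hB : R.card * (R.card - 1) ≤ R.card * 11 :=
    Nat.mul_le_mul_left _ (by omega)
  have hpos := Finset.card_pos.mpr hRne
  have hC : 6 * R.card * 2 ≤ R.card * 11 := le_trans (by omega) (le_trans hA hB)
  have hD : 12 * R.card ≤ 11 * R.card := by
    calc 12 * R.card = 6 * R.card * 2 := by ring
    _ ≤ R.card * 11 := hC
    _ = 11 * R.card := by ring
  omega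
end Layer6
theorem stmt18 [DecidableEq V] (r : V → V → Prop) [DecidableRel r] (s : Finset V)
    (hT : IsTournament r s) (R1 R2 : Finset V)
    (h1 : MinRetentive r s R1) (h2 : MinRetentive r s R2) (hne : R1 ≠ R2)
    (hc1 : R1.card = 3) (hc2 : R2.card ≤ 12) :
    False := by
  classical
  have hdisj : ∀ z, z ∈ R1 → z ∈ R2 → False :=
    fun z hz1 hz2 => minRetentive_disjoint r h1 h2 hne hz1 hz2
  obtain ⟨a, b, c, hab, hac, hbc, hR1eq, e1, e2, e3, P1, P2, P3⟩ := size3 r hT h1 hc1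
  have haR1 : a ∈ R1 := by rw [hR1eq]; simp
  have hbR1 : b ∈ R1 := by rw [hR1eq]; simp
  have hcR1 : c ∈ R1 := by rw [hR1eq]; simp
  have hag := h1.1.1 haR1
  have hbg := h1.1.1 hbR1
  have hcg := h1.1.1 hcR1
  have dom1 := size3_dom r hT h1 hc1
  -- low indegree vertex of R2
  obtain ⟨v, hvR2, hvdeg⟩ := exists_low_indeg r hT h2.1.1 h2.1.2.1 hc2
  have hvs : v ∈ s := h2.1.1 hvR2
  have hvR1 : v ∉ R1 := fun h => hdisj v h hvR2
  have hva : v ≠ a := fun h => hvR1 (by rw [h]; exact haR1)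
  have hvb : v ≠ b := fun h => hvR1 (by rw [h]; exact hbR1)
  have hvc : v ≠ c := fun h => hvR1 (by rw [h]; exact hcR1)
  -- find a cycle edge (x, y) with both beating v
  have hpair : ∃ x y : V, x ∈ R1 ∧ y ∈ R1 ∧ r x y ∧ r x v ∧ r y v ∧
      (∀ d ∈ s, d ≠ x → r d y → r x d) := by
    rcases tourn_total r hT hag hvs (Ne.symm hva) with ha | ha <;>
      rcases tourn_total r hT hbg hvs (Ne.symm hvb) with hb | hb <;>
        rcases tourn_total r hT hcg hvs (Ne.symm hvc) with hc' | hc'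
    · exact ⟨a, b, haR1, hbR1, e1, ha, hb, P1⟩
    · exact ⟨a, b, haR1, hbR1, e1, ha, hb, P1⟩
    · exact ⟨c, a, hcR1, haR1, e3, hc', ha, P3⟩
    · exact (dom1 v hvs b hbR1 c hcR1 hbc hb hc').elim
    · exact ⟨b, c, hbR1, hcR1, e2, hb, hc', P2⟩
    · exact (dom1 v hvs a haR1 c hcR1 hac ha hc').elim
    · exact (dom1 v hvs a haR1 b hbR1 hab ha hb).elim
    · exact (dom1 v hvs a haR1 b hbR1 hab ha hb).elim
  obtain ⟨x, y, hx1, hy1, hxy, hxv, hyv, Plink⟩ := hpair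
  have hxs : x ∈ s := h1.1.1 hx1
  have hys : y ∈ s := h1.1.1 hy1
  have hxny : x ≠ y := fun h => hT.1 y hys (by rw [← h] at hxy ⊢; exact hxy)
  have hxnv : x ≠ v := fun h => hvR1 (by rw [← h]; exact hx1)
  have hynv : y ≠ v := fun h => hvR1 (by rw [← h]; exact hy1)
  set gv := inn r s v with hgvdef
  have hx_gv : x ∈ gv := (mem_inn r).mpr ⟨hxnv, hxs, hxv⟩
  have hy_gv : y ∈ gv := (mem_inn r).mpr ⟨hynv, hys, hyv⟩
  have hgv_ne : gv.Nonempty := ⟨x, hx_gv⟩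
  have hTg : IsTournament r gv := isTournament_subset r (inn_subset r) hT
  have htausub : tau r gv ⊆ ↑(R2 ∩ gv) := by
    intro z hz
    exact Finset.mem_coe.mpr (Finset.mem_inter.mpr
      ⟨Finset.mem_coe.mp (h2.1.2.2 v hvR2 hgv_ne hz), tau_subset r hz⟩)
  have hIeq : R2 ∩ gv = inn r R2 v := by
    ext z
    simp only [Finset.mem_inter, hgvdef, mem_inn]
    constructor
    · rintro ⟨hz2, hzv, _, hrz⟩
      exact ⟨hzv, hz2, hrz⟩
    · rintro ⟨hzv, hz2, hrz⟩
      exact ⟨hz2, hzv, h2.1.1 hz2, hrz⟩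
  have hIcard : (R2 ∩ gv).card ≤ 5 := by rw [hIeq]; exact hvdeg
  obtain ⟨Q, hQmin, hQtau, hQsz⟩ := tau_single r hTg hgv_ne hIcard htausub
    (fun Q' hQ' _ => no_card_four r hTg hQ')
  have hQsubR2 : ∀ z ∈ Q, z ∈ R2 := fun z hz =>
    (Finset.mem_inter.mp (Finset.mem_coe.mp
      (htausub (minRetentive_subset_tau r hQmin hz)))).1
  have hxQ : x ∉ Q := fun h => hdisj x hx1 (hQsubR2 x h)
  have hyQ : y ∉ Q := fun h => hdisj y hy1 (hQsubR2 y h)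
  have hCWg : ∀ z ∈ gv, z ≠ x → r z y → r x z :=
    fun z hz hzx hzy => Plink z (inn_subset r hz) hzx hzy
  rcases hQsz with hsz | hsz | hsz
  · -- Condorcet winner of gv beats both x and y
    obtain ⟨w, rfl⟩ := Finset.card_eq_one.mp hsz
    have hwQ : w ∈ ({w} : Finset V) := by simp
    have hwinn : inn r gv w = ∅ := minRetentive_singleton_inn_empty r hQmin hsz hwQ
    have hwg : w ∈ gv := hQmin.1.1 hwQ
    have hwx : r w x := cw_beats r hTg hwg hwinn hx_gv (fun h => hxQ (by rw [h]; exact hwQ))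
    have hwy : r w y := cw_beats r hTg hwg hwinn hy_gv (fun h => hyQ (by rw [h]; exact hwQ))
    exact dom1 w (inn_subset r hwg) x hx1 y hy1 hxny hwx hwy
  · -- size-3 component: counting contradiction
    have dom3 := size3_dom r hTg hQmin hsz
    have hdisjB : ∀ z ∈ Q, r z x → r z y → False := by
      intro z hz hzx hzy
      have hzgv : z ∈ gv := hQmin.1.1 hz
      have hzx' : z ≠ x := fun h => hxQ (by rw [← h]; exact hz)
      exact tourn_asym r hTg hzgv hx_gv hzx (hCWg z hzgv hzx' hzy)
    have hcount : ∀ d : V, d ∈ gv → d ∉ Q →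
        2 ≤ (Q.filter (fun z => r z d)).card := by
      intro d hd hdQ
      have hle1 : (Q.filter (fun z => ¬ r z d)).card ≤ 1 := by
        rw [Finset.card_le_one]
        intro z1 hz1 z2 hz2
        by_contra hne12
        rw [Finset.mem_filter] at hz1 hz2
        have hbeat : ∀ z ∈ Q, ¬ r z d → r d z := by
          intro z hz hn
          have hzd : d ≠ z := fun h => hdQ (by rw [h]; exact hz)
          rcases tourn_total r hTg hd (hQmin.1.1 hz) hzd with h | h
          · exact h
          · exact absurd h hn
        exact dom3 d hd z1 hz1.1 z2 hz2.1 hne12 (hbeat z1 hz1.1 hz1.2) (hbeat z2 hz2.1 hz2.2)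
      have hsplit := Finset.card_filter_add_card_filter_not
        (s := Q) (p := fun z => r z d)
      omega
    have hBx := hcount x hx_gv hxQ
    have hBy := hcount y hy_gv hyQ
    have hinter : (Q.filter (fun z => r z x)) ∩ (Q.filter (fun z => r z y)) = ∅ := by
      rw [Finset.eq_empty_iff_forall_notMem]
      intro z hz
      rw [Finset.mem_inter, Finset.mem_filter, Finset.mem_filter] at hz
      exact hdisjB z hz.1.1 hz.1.2 hz.2.2
    have hunion : (Q.filter (fun z => r z x)) ∪ (Q.filter (fun z => r z y)) ⊆ Q :=
      Finset.union_subset (Finset.filter_subset _ _) (Finset.filter_subset _ _)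
    have hcard1 := Finset.card_union_add_card_inter
      (Q.filter (fun z => r z x)) (Q.filter (fun z => r z y))
    have hcard2 := Finset.card_le_card hunion
    rw [hinter] at hcard1
    simp only [Finset.card_empty] at hcard1
    omega
  · exact size5 r hTg hQmin hsz hx_gv hy_gv hxQ hyQ hCWg
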